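/- Grassmann necklace property of minimal bases: for every a ∈ ℤ, regarding the a-minimal bases as k-element sets of residues modulo n, if a ∈ I→_a then I→_a \ {a} ⊆ I→_{a+1}, while if a ∉ I→_a then I→_a = I→_{a+1}. -/

import Mathlib

open scoped BigOperators

/-- The columns of `A` are `n`-periodic. -/
def ColPeriodic (k n : ℕ) (A : ℤ → Fin k → ℂ) : Prop :=
  ∀ a : ℤ, A (a + (n : ℤ)) = A a

/-- `A` has rank `k`, i.e. its columns span `ℂ^k`. -/
def FullRank (k : ℕ) (A : ℤ → Fin k → ℂ) : Prop :=
  Submodule.span ℂ (Set.range A) = ⊤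

/-- The Gale (componentwise) partial order on finite subsets of `ℤ` of equal
cardinality: `B ≼ C` iff they have the same cardinality and, for each `i`, the
`i`-th smallest element of `B` is at most the `i`-th smallest element of `C`
(equivalently, the counting condition below). -/
def galeLE (B C : Finset ℤ) : Prop :=
  B.card = C.card ∧
    ∀ t : ℤ, (B.filter fun x => t ≤ x).card ≤ (C.filter fun x => t ≤ x).card

/-- The columns of `A` indexed by `J` form a basis of `ℂ^k`. -/
def IsColBasis (k : ℕ) (A : ℤ → Fin k → ℂ) (J : Finset ℤ) : Prop :=
  J.card = k ∧ LinearIndependent ℂ (fun j : (J : Set ℤ) => A (j : ℤ)) ∧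
    Submodule.span ℂ (A '' (J : Set ℤ)) = ⊤

/-- `I` is the `≼_a`-minimal `k`-element subset of `{a, a+1, …, a+n-1}` whose
columns form a basis of `ℂ^k` (the `a`-minimal basis `I→_a`). -/
def IsMinBasis (k n : ℕ) (A : ℤ → Fin k → ℂ) (a : ℤ) (I : Finset ℤ) : Prop :=
  I ⊆ Finset.Ico a (a + (n : ℤ)) ∧ IsColBasis k A I ∧
    ∀ J : Finset ℤ, J ⊆ Finset.Ico a (a + (n : ℤ)) → IsColBasis k A J → galeLE I J

/-- `I` is the `≼_{a+1}`-maximal `k`-element subset of `{a-n+1, …, a}` whose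
columns form a basis of `ℂ^k` (the `a`-maximal basis `I←_a`).  Note that on
representatives in `{a-n+1, …, a}` the cyclic order `≺_{a+1}` agrees with the
usual order of `ℤ`. -/
def IsMaxBasis (k n : ℕ) (A : ℤ → Fin k → ℂ) (a : ℤ) (I : Finset ℤ) : Prop :=
  I ⊆ Finset.Ioc (a - (n : ℤ)) a ∧ IsColBasis k A I ∧
    ∀ J : Finset ℤ, J ⊆ Finset.Ioc (a - (n : ℤ)) a → IsColBasis k A J → galeLE J I

/-- The standard symmetric bilinear form `⟨x|y⟩ = ∑ i, x i * y i` on `ℂ^k`. -/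
noncomputable def bil (k : ℕ) (x y : Fin k → ℂ) : ℂ := ∑ i, x i * y i

/-- `π` is the bounded affine permutation of `A`:
`π a` is the least `r` with `a ≤ r ≤ a + n` and `A a ∈ span(A (a+1), …, A r)`. -/
def IsBAP (k n : ℕ) (A : ℤ → Fin k → ℂ) (π : ℤ → ℤ) : Prop :=
  ∀ a : ℤ,
    a ≤ π a ∧ π a ≤ a + (n : ℤ) ∧
    A a ∈ Submodule.span ℂ (A '' Set.Ioc a (π a)) ∧
    ∀ r : ℤ, a ≤ r → r ≤ a + (n : ℤ) →
      A a ∈ Submodule.span ℂ (A '' Set.Ioc a r) → π a ≤ r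

/-- `T` is the right twist `τ→(A)`: for each `a`, the column `T a` pairs to `1`
with `A a` and to `0` with the other columns of the `a`-minimal basis. -/
def IsRightTwist (k n : ℕ) (A T : ℤ → Fin k → ℂ) : Prop :=
  ∀ (a : ℤ) (I : Finset ℤ), IsMinBasis k n A a I →
    ∀ b ∈ I, bil k (T a) (A b) = if b = a then 1 else 0

/-- `T` is the left twist `τ←(A)`: for each `a`, the column `T a` pairs to `1`
with `A a` and to `0` with the other columns of the `a`-maximal basis. -/
def IsLeftTwist (k n : ℕ) (A T : ℤ → Fin k → ℂ) : Prop :=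
  ∀ (a : ℤ) (I : Finset ℤ), IsMaxBasis k n A a I →
    ∀ b ∈ I, bil k (T a) (A b) = if b = a then 1 else 0

/-- `Δ_I(A)`, where `I = {i 0 < i 1 < ⋯ < i (k-1)}` is given by a strictly
monotone enumeration `i : Fin k → ℤ`: the determinant of the `k×k` matrix with
columns `A (i 0), …, A (i (k-1))`. -/
noncomputable def Delta (k : ℕ) (A : ℤ → Fin k → ℂ) (i : Fin k → ℤ) : ℂ :=
  Matrix.det (Matrix.of fun r s : Fin k => A (i s) r)

section Aux

variable {k n : ℕ} {A : ℤ → Fin k → ℂ}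

private lemma indep_erase_iff {I : Finset ℤ} {j : ℤ} (hj : j ∈ I) :
    LinearIndependent ℂ (fun x : (I : Set ℤ) => A (x : ℤ)) ↔
      (LinearIndependent ℂ (fun x : ((I.erase j : Finset ℤ) : Set ℤ) => A (x : ℤ)) ∧
        A j ∉ Submodule.span ℂ (A '' ((I.erase j : Finset ℤ) : Set ℤ))) := by
  have h1 : (I : Set ℤ) = insert j ((I.erase j : Finset ℤ) : Set ℤ) := by
    rw [← Finset.coe_insert, Finset.insert_erase hj]
  rw [h1]
  exact linearIndepOn_insert (by simp)

private lemma isColBasis_of_span {I : Finset ℤ} (hcard : I.card = k)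
    (hspan : Submodule.span ℂ (A '' (I : Set ℤ)) = ⊤) : IsColBasis k A I := by
  refine ⟨hcard, ?_, hspan⟩
  apply linearIndependent_of_top_le_span_of_card_eq_finrank
  · rw [← Set.image_eq_range, hspan]
  · simp [hcard, Module.finrank_fin_fun]

private lemma isColBasis_of_indep {I : Finset ℤ} (hcard : I.card = k)
    (hindep : LinearIndependent ℂ (fun x : (I : Set ℤ) => A (x : ℤ))) : IsColBasis k A I := by
  refine ⟨hcard, hindep, ?_⟩
  rw [Set.image_eq_range]
  exact hindep.span_eq_top_of_card_eq_finrank' (by simp [hcard, Module.finrank_fin_fun])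

private lemma gale_absurd {I : Finset ℤ} {x y : ℤ} (hxy : x < y) (hy : y ∈ I) (hx : x ∉ I)
    (hg : galeLE I (insert x (I.erase y))) : False := by
  obtain ⟨-, h⟩ := hg
  have h1 := h (x + 1)
  rw [Finset.filter_insert, if_neg (by omega : ¬ x + 1 ≤ x), Finset.filter_erase,
    Finset.card_erase_of_mem (Finset.mem_filter.2 ⟨hy, by omega⟩)] at h1
  have h3 : 0 < (I.filter fun z => x + 1 ≤ z).card :=
    Finset.card_pos.2 ⟨y, Finset.mem_filter.2 ⟨hy, by omega⟩⟩
  omega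

private lemma mem_minBasis_iff {a : ℤ} {I : Finset ℤ} (hI : IsMinBasis k n A a I)
    {j : ℤ} (hj : j ∈ Finset.Ico a (a + (n : ℤ))) :
    j ∈ I ↔ A j ∉ Submodule.span ℂ (A '' Set.Ico a j) := by
  obtain ⟨hsub, ⟨hcard, hindep, hspan⟩, hmin⟩ := hI
  have hIpos : 0 < I.card → True := fun _ => trivial
  constructor
  · intro hjI hmem
    obtain ⟨hind', hnot⟩ := (indep_erase_iff hjI).1 hindep
    by_cases hall : ∀ i ∈ Set.Ico a j,
        A i ∈ Submodule.span ℂ (A '' ((I.erase j : Finset ℤ) : Set ℤ))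
    · exact hnot (Submodule.span_le.2 (by rintro _ ⟨i, hi, rfl⟩; exact hall i hi) hmem)
    push_neg at hall
    obtain ⟨i, hi, hinot⟩ := hall
    have hinotmem : i ∉ I.erase j := fun hmem' =>
      hinot (Submodule.subset_span ⟨i, by exact_mod_cast hmem', rfl⟩)
    have hiI : i ∉ I := fun h => hinotmem (Finset.mem_erase.2 ⟨ne_of_lt hi.2, h⟩)
    have hindep' : LinearIndependent ℂ
        (fun x : ((insert i (I.erase j) : Finset ℤ) : Set ℤ) => A (x : ℤ)) := by
      have h2 : ((insert i (I.erase j) : Finset ℤ) : Set ℤ)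
          = insert i ((I.erase j : Finset ℤ) : Set ℤ) := by
        simp
      rw [h2]
      exact (linearIndepOn_insert (by exact_mod_cast hinotmem)).2 ⟨hind', hinot⟩
    have hcpos : 0 < I.card := Finset.card_pos.2 ⟨j, hjI⟩
    have hcard' : (insert i (I.erase j)).card = k := by
      rw [Finset.card_insert_of_notMem hinotmem, Finset.card_erase_of_mem hjI]
      omega
    have hsub' : insert i (I.erase j) ⊆ Finset.Ico a (a + (n : ℤ)) := by
      intro x hx
      rcases Finset.mem_insert.1 hx with rfl | hx
      · exact Finset.mem_Ico.2 ⟨hi.1, lt_of_lt_of_le hi.2 (Finset.mem_Ico.1 hj).2.le⟩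
      · exact hsub (Finset.mem_erase.1 hx).2
    exact gale_absurd hi.2 hjI hiI
      (hmin _ hsub' (isColBasis_of_indep hcard' hindep'))
  · intro hnot
    by_contra hjI
    have hjtop : A j ∈ Submodule.span ℂ (A '' (I : Set ℤ)) := hspan ▸ Submodule.mem_top
    obtain ⟨l, hl, hlc⟩ := (Finsupp.mem_span_image_iff_linearCombination ℂ).1 hjtop
    rw [Finsupp.linearCombination_apply, Finsupp.sum] at hlc
    by_cases hallm : ∀ m ∈ l.support, m < j
    · apply hnot
      rw [← hlc]
      apply Submodule.sum_mem
      intro m hm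
      have hmI : m ∈ I := by exact_mod_cast hl hm
      exact Submodule.smul_mem _ _ (Submodule.subset_span
        ⟨m, ⟨(Finset.mem_Ico.1 (hsub hmI)).1, hallm m hm⟩, rfl⟩)
    push_neg at hallm
    obtain ⟨m, hm, hjm⟩ := hallm
    have hmI : m ∈ I := by exact_mod_cast hl hm
    have hjm' : j < m := lt_of_le_of_ne hjm (fun h => hjI (h ▸ hmI))
    have hjnotin : j ∉ I.erase m := fun h => hjI (Finset.mem_erase.1 h).2
    have herasesub : ((I.erase m : Finset ℤ) : Set ℤ) ⊆
        ((insert j (I.erase m) : Finset ℤ) : Set ℤ) := by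
      intro x hx; simp only [Finset.coe_insert, Set.mem_insert_iff]; exact Or.inr hx
    have hmmem : A m ∈ Submodule.span ℂ (A '' ((insert j (I.erase m) : Finset ℤ) : Set ℤ)) := by
      have hAj : A j ∈ Submodule.span ℂ (A '' ((insert j (I.erase m) : Finset ℤ) : Set ℤ)) :=
        Submodule.subset_span ⟨j, by simp, rfl⟩
      have hsum : ∑ i ∈ l.support.erase m, l i • A i ∈
          Submodule.span ℂ (A '' ((insert j (I.erase m) : Finset ℤ) : Set ℤ)) := by
        apply Submodule.sum_mem
        intro i hi
        have hiI : i ∈ I := by exact_mod_cast hl (Finset.mem_of_mem_erase hi)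
        have : i ∈ I.erase m := Finset.mem_erase.2 ⟨(Finset.mem_erase.1 hi).1, hiI⟩
        exact Submodule.smul_mem _ _ (Submodule.subset_span ⟨i, herasesub (by exact_mod_cast this), rfl⟩)
      have heq : l m • A m = A j - ∑ i ∈ l.support.erase m, l i • A i := by
        rw [← hlc, ← Finset.add_sum_erase _ _ hm]
        abel
      have hlm : l m ≠ 0 := Finsupp.mem_support_iff.1 hm
      have : A m = (l m)⁻¹ • (l m • A m) := by
        rw [smul_smul, inv_mul_cancel₀ hlm, one_smul]
      rw [this, heq]
      exact Submodule.smul_mem _ _ (Submodule.sub_mem _ hAj hsum)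
    have hspan'' : Submodule.span ℂ (A '' ((insert j (I.erase m) : Finset ℤ) : Set ℤ)) = ⊤ := by
      rw [← top_le_iff, ← hspan, Submodule.span_le]
      rintro _ ⟨x, hx, rfl⟩
      by_cases hxm : x = m
      · subst hxm; exact hmmem
      · have : x ∈ I.erase m := Finset.mem_erase.2 ⟨hxm, by exact_mod_cast hx⟩
        exact Submodule.subset_span ⟨x, herasesub (by exact_mod_cast this), rfl⟩
    have hcpos : 0 < I.card := Finset.card_pos.2 ⟨m, hmI⟩
    have hcard'' : (insert j (I.erase m)).card = k := by
      rw [Finset.card_insert_of_notMem hjnotin, Finset.card_erase_of_mem hmI]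
      omega
    have hsub'' : insert j (I.erase m) ⊆ Finset.Ico a (a + (n : ℤ)) := by
      intro x hx
      rcases Finset.mem_insert.1 hx with rfl | hx
      · exact hj
      · exact hsub (Finset.mem_erase.1 hx).2
    exact gale_absurd hjm' hmI hjI (hmin _ hsub'' (isColBasis_of_span hcard'' hspan''))

end Aux

/-- Grassmann necklace property of minimal bases:
for every `a ∈ ℤ`, regarding the `a`-minimal bases as `k`-element sets of
residues modulo `n`, if `a ∈ I→_a` then `I→_a \ {a} ⊆ I→_{a+1}`, while if
`a ∉ I→_a` then `I→_a = I→_{a+1}`. -/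
theorem grassmann_necklace_property
    (k n : ℕ) (hk : 1 ≤ k) (hkn : k ≤ n)
    (A : ℤ → Fin k → ℂ) (hper : ColPeriodic k n A) (hrank : FullRank k A)
    (a : ℤ) (Ia Ia' : Finset ℤ)
    (hIa : IsMinBasis k n A a Ia) (hIa' : IsMinBasis k n A (a + 1) Ia') :
    (a ∈ Ia →
      (Ia.erase a).image (fun x : ℤ => (x : ZMod n)) ⊆
        Ia'.image (fun x : ℤ => (x : ZMod n))) ∧
    (a ∉ Ia →
      Ia.image (fun x : ℤ => (x : ZMod n)) =
        Ia'.image (fun x : ℤ => (x : ZMod n))) := by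
  have hn1 : (1 : ℤ) ≤ (n : ℤ) := by exact_mod_cast hk.trans hkn
  constructor
  · intro haIa
    apply Finset.image_subset_image
    intro j hj
    obtain ⟨hja, hjI⟩ := Finset.mem_erase.1 hj
    have hjwin := hIa.1 hjI
    have hb := Finset.mem_Ico.1 hjwin
    have hjwin1 : j ∈ Finset.Ico (a + 1) (a + 1 + (n : ℤ)) := Finset.mem_Ico.2 ⟨by omega, by omega⟩
    have hchar := (mem_minBasis_iff hIa hjwin).1 hjI
    rw [mem_minBasis_iff hIa' hjwin1]
    intro hmem
    exact hchar (Submodule.span_mono (Set.image_mono (Set.Ico_subset_Ico_left (by omega))) hmem)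
  · intro haIa
    have hawin : a ∈ Finset.Ico a (a + (n : ℤ)) := Finset.mem_Ico.2 ⟨le_refl a, by omega⟩
    have hA0 : A a = 0 := by
      have hiff := mem_minBasis_iff hIa hawin
      have h2 : A a ∈ Submodule.span ℂ (A '' Set.Ico a a) := by
        by_contra h3; exact haIa (hiff.2 h3)
      rw [Set.Ico_self, Set.image_empty, Submodule.span_empty, Submodule.mem_bot] at h2
      exact h2
    suffices h : Ia = Ia' by rw [h]
    apply Finset.Subset.antisymm
    · intro j hjI
      have hjwin := hIa.1 hjI
      have hja : j ≠ a := fun h => haIa (h ▸ hjI)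
      have hb := Finset.mem_Ico.1 hjwin
      have hjwin1 : j ∈ Finset.Ico (a + 1) (a + 1 + (n : ℤ)) :=
        Finset.mem_Ico.2 ⟨by omega, by omega⟩
      have hchar := (mem_minBasis_iff hIa hjwin).1 hjI
      rw [mem_minBasis_iff hIa' hjwin1]
      intro hmem
      exact hchar (Submodule.span_mono (Set.image_mono (Set.Ico_subset_Ico_left (by omega))) hmem)
    · intro j hjI'
      have hjwin1 := hIa'.1 hjI'
      have hb := Finset.mem_Ico.1 hjwin1
      have hchar := (mem_minBasis_iff hIa' hjwin1).1 hjI'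
      have hjne : j ≠ a + (n : ℤ) := by
        rintro rfl
        exact hchar (by rw [hper a, hA0]; exact Submodule.zero_mem _)
      have hjwin : j ∈ Finset.Ico a (a + (n : ℤ)) := Finset.mem_Ico.2 ⟨by omega, by omega⟩
      rw [mem_minBasis_iff hIa hjwin]
      intro hmem
      apply hchar
      have hIco : Set.Ico a j = insert a (Set.Ico (a + 1) j) := by
        ext x; simp only [Set.mem_Ico, Set.mem_insert_iff]; omega
      rw [hIco, Set.image_insert_eq, hA0, Submodule.span_insert_zero] at hmem
      exact hmem
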